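/- Let X be a Hausdorff space such that every point x ∈ X admits a countable family of open neighborhoods whose closures intersect exactly in {x}, and assume that the closure of every countable strongly discrete subset of X is countably compact. Then X is countably compact. -/

import Mathlib

open Set

def StronglyDiscrete {X : Type*} [TopologicalSpace X] (D : Set X) : Prop :=
  ∃ U : X → Set X, (∀ d ∈ D, IsOpen (U d) ∧ d ∈ U d) ∧ D.PairwiseDisjoint U

def CountablyCompactSet {X : Type*} [TopologicalSpace X] (s : Set X) : Prop :=
  ∀ U : ℕ → Set X, (∀ n, IsOpen (U n)) → s ⊆ ⋃ n, U n → ∃ t : Finset ℕ, s ⊆ ⋃ n ∈ t, U n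

section Aux
variable {X : Type*} [TopologicalSpace X]

lemma aux_closed [T1Space X] (b : ℕ → X)
    (hb : ∀ z : X, ∃ W : Set X, IsOpen W ∧ z ∈ W ∧ {m | b m ∈ W}.Finite) :
    ∀ E ⊆ range b, IsClosed E := by
  intro E hE
  refine isClosed_of_closure_subset ?_
  intro z hz
  obtain ⟨W, hWo, hWz, hWf⟩ := hb z
  have hEW : (E ∩ W).Finite := by
    have : E ∩ W ⊆ b '' {m | b m ∈ W} := by
      rintro y ⟨hyE, hyW⟩
      obtain ⟨m, rfl⟩ := hE hyE
      exact ⟨m, hyW, rfl⟩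
    exact (hWf.image b).subset this
  have hfin : ((E ∩ W) \ {z}).Finite := hEW.diff
  have hW' : IsOpen (W \ ((E ∩ W) \ {z})) := hWo.sdiff hfin.isClosed
  have hzW' : z ∈ W \ ((E ∩ W) \ {z}) := ⟨hWz, by simp⟩
  obtain ⟨y, hy1, hy2⟩ := mem_closure_iff.mp hz _ hW' hzW'
  rcases hy1 with ⟨hyW, hyne⟩
  by_contra hzE
  exact hyne ⟨⟨hy2, hyW⟩, by rintro rfl; exact hzE hy2⟩

lemma aux_K1 [T1Space X]
    (hsd : ∀ D : Set X, D.Countable → StronglyDiscrete D → CountablyCompactSet (closure D))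
    (b : ℕ → X) (hinj : Function.Injective b)
    (hb : ∀ z : X, ∃ W : Set X, IsOpen W ∧ z ∈ W ∧ {m | b m ∈ W}.Finite)
    (G : ℕ → Set X) (hGo : ∀ m, IsOpen (G m)) (hGm : ∀ m, b m ∈ G m)
    (hGd : ∀ m n, m ≠ n → Disjoint (G m) (G n)) : False := by
  classical
  set U : X → Set X := fun y => if h : ∃ m, b m = y then G h.choose else ∅ with hU
  have hUval : ∀ m, U (b m) = G m := by
    intro m
    have h : ∃ k, b k = b m := ⟨m, rfl⟩
    have : h.choose = m := hinj h.choose_spec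
    simp [hU, dif_pos h, this]
  have hSD : StronglyDiscrete (range b) := by
    refine ⟨U, ?_, ?_⟩
    · rintro d ⟨m, rfl⟩
      rw [hUval]; exact ⟨hGo m, hGm m⟩
    · rintro d ⟨m, rfl⟩ d' ⟨m', rfl⟩ hne
      have hmm : m ≠ m' := by rintro rfl; exact hne rfl
      rw [Function.onFun, hUval, hUval]
      exact hGd m m' hmm
  have hcl : closure (range b) = range b :=
    (aux_closed b hb (range b) subset_rfl).closure_eq
  have hCC := hsd (range b) (countable_range b) hSD
  rw [hcl] at hCC
  obtain ⟨t, ht⟩ := hCC G hGo (by rintro y ⟨m, rfl⟩; exact mem_iUnion.mpr ⟨m, hGm m⟩)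
  set m := (t.sup id) + 1 with hm
  have hmt : m ∉ t := by
    intro h
    have := Finset.le_sup (f := id) h
    simp only [id_eq, hm] at this
    omega
  obtain ⟨n, hn, hmem⟩ := mem_iUnion₂.mp (ht ⟨m, rfl⟩)
  have hnm : n ≠ m := by rintro rfl; exact hmt hn
  exact (hGd n m hnm).le_bot ⟨hmem, hGm m⟩ |>.elim

end Aux

theorem stmt5 {X : Type*} [TopologicalSpace X] [T2Space X]
    (hpsi : ∀ x : X, ∃ V : ℕ → Set X, (∀ n, IsOpen (V n) ∧ x ∈ V n) ∧
      ⋂ n, closure (V n) = {x})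
    (hsd : ∀ D : Set X, D.Countable → StronglyDiscrete D → CountablyCompactSet (closure D)) :
    CountablyCompactSet (univ : Set X) := by
  classical
  by_contra hcc
  unfold CountablyCompactSet at hcc
  push_neg at hcc
  obtain ⟨U, hUo, hUc, hnofin⟩ := hcc
  -- a sequence escaping every finite subfamily
  have hx : ∀ k : ℕ, ∃ z : X, z ∉ ⋃ n ∈ Finset.range (k+1), U n := by
    intro k
    by_contra h
    push_neg at h
    exact hnofin (Finset.range (k+1)) (fun z _ => h z)
  choose x hxp using hx
  have hfib : ∀ N k, N ≤ k → x k ∉ U N := by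
    intro N k hNk hmem
    exact hxp k (mem_iUnion₂.mpr ⟨N, Finset.mem_range.mpr (by omega), hmem⟩)
  have hstar : ∀ z : X, ∃ W : Set X, IsOpen W ∧ z ∈ W ∧ {k | x k ∈ W}.Finite := by
    intro z
    obtain ⟨N, hN⟩ := mem_iUnion.mp (hUc (mem_univ z))
    refine ⟨U N, hUo N, hN, ?_⟩
    refine Set.Finite.subset (Set.finite_Iio N) ?_
    intro k hk
    by_contra h
    simp only [mem_Iio, not_lt] at h
    exact hfib N k h hk
  -- choose fresh points avoiding any finite set
  have hfresh : ∀ s : Finset X, ∃ k : ℕ, x k ∉ (s : Set X) := by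
    intro s
    have hfin : {k | x k ∈ (s : Set X)}.Finite := by
      have : {k | x k ∈ (s : Set X)} ⊆ ⋃ z ∈ (s : Set X), {k | x k ∈ (hstar z).choose} := by
        intro k hk
        exact mem_iUnion₂.mpr ⟨x k, hk, (hstar (x k)).choose_spec.2.1⟩
      exact Set.Finite.subset (Set.Finite.biUnion s.finite_toSet
        (fun z _ => (hstar z).choose_spec.2.2)) this
    obtain ⟨k, hk⟩ := hfin.infinite_compl.nonempty
    exact ⟨k, hk⟩
  choose f hf using hfresh
  set F : ℕ → Finset X := fun m => Nat.rec (∅ : Finset X) (fun _ s => insert (x (f s)) s) m with hF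
  set a : ℕ → X := fun m => x (f (F m)) with ha
  have hFsucc : ∀ m, F (m+1) = insert (a m) (F m) := fun m => rfl
  have hFmono : ∀ {m m'}, m ≤ m' → F m ⊆ F m' := by
    intro m m' h
    induction m' with
    | zero => simp_all
    | succ n ih =>
      rcases Nat.lt_or_ge m (n+1) with h' | h'
      · exact (ih (by omega)).trans (by rw [hFsucc]; exact Finset.subset_insert _ _)
      · have : m = n + 1 := by omega
        subst this; exact subset_rfl
  have hanotin : ∀ m, a m ∉ (F m : Set X) := fun m => hf (F m)
  have hainj : Function.Injective a := by
    intro m m' hmm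
    by_contra hne
    rcases Nat.lt_or_ge m m' with h | h
    · have : a m ∈ (F m' : Set X) := by
        have : a m ∈ (F (m+1) : Set X) := by rw [hFsucc]; simp
        exact hFmono (show m+1 ≤ m' by omega) this
      rw [hmm] at this
      exact hanotin m' this
    · have h2 : m' < m := by omega
      have : a m' ∈ (F m : Set X) := by
        have : a m' ∈ (F (m'+1) : Set X) := by rw [hFsucc]; simp
        exact hFmono (show m'+1 ≤ m by omega) this
      rw [← hmm] at this
      exact hanotin m this
  have hxinj : Function.Injective (fun m => f (F m)) := by
    intro m m' h
    apply hainj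
    exact congrArg x h
  have hastar : ∀ z : X, ∃ W : Set X, IsOpen W ∧ z ∈ W ∧ {m | a m ∈ W}.Finite := by
    intro z
    obtain ⟨W, h1, h2, h3⟩ := hstar z
    refine ⟨W, h1, h2, ?_⟩
    have : {m | a m ∈ W} = (fun m => f (F m)) ⁻¹' {k | x k ∈ W} := rfl
    rw [this]
    exact Set.Finite.preimage hxinj.injOn h3
  -- isolated points dichotomy
  by_cases hIso : {m | IsOpen ({a m} : Set X)}.Infinite
  · set emb := hIso.natEmbedding with hemb
    set b : ℕ → X := fun n => a ((emb n : ℕ)) with hb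
    have hbinj : Function.Injective b := by
      intro n n' h
      exact emb.injective (Subtype.ext (hainj h))
    have hbstar : ∀ z : X, ∃ W : Set X, IsOpen W ∧ z ∈ W ∧ {m | b m ∈ W}.Finite := by
      intro z
      obtain ⟨W, h1, h2, h3⟩ := hastar z
      refine ⟨W, h1, h2, ?_⟩
      have : {n | b n ∈ W} = (fun n => ((emb n : ℕ))) ⁻¹' {m | a m ∈ W} := rfl
      rw [this]
      exact Set.Finite.preimage (fun p _ q _ h => emb.injective (Subtype.ext h)) h3
    refine aux_K1 hsd b hbinj hbstar (fun n => {b n}) (fun n => (emb n).2) (fun n => rfl) ?_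
    intro m n hmn
    exact Set.disjoint_singleton.mpr (fun h => hmn (hbinj h))
  · have hfin := Set.not_infinite.mp hIso
    obtain ⟨B, hB⟩ := hfin.bddAbove
    set a' : ℕ → X := fun m => a (m + (B+1)) with ha'
    have ha'inj : Function.Injective a' := by
      intro m m' h
      simp only [ha'] at h
      have h2 : m + (B+1) = m' + (B+1) := hainj h
      omega
    have hni : ∀ m, ¬ IsOpen ({a' m} : Set X) := by
      intro m h
      have : m + (B+1) ∈ {m | IsOpen ({a m} : Set X)} := h
      have := hB this
      omega
    have ha'star : ∀ z : X, ∃ W : Set X, IsOpen W ∧ z ∈ W ∧ {m | a' m ∈ W}.Finite := by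
      intro z
      obtain ⟨W, h1, h2, h3⟩ := hastar z
      refine ⟨W, h1, h2, ?_⟩
      have : {m | a' m ∈ W} = (fun m => m + (B+1)) ⁻¹' {m | a m ∈ W} := rfl
      rw [this]
      exact Set.Finite.preimage (fun p _ q _ h => by omega) h3
    -- decreasing closed-pseudocharacter systems at every point
    have hsys : ∀ z : X, ∃ V : ℕ → Set X, (∀ n, IsOpen (V n)) ∧ (∀ n, z ∈ V n) ∧
        (∀ n n', n ≤ n' → V n' ⊆ V n) ∧ (⋂ n, closure (V n)) = {z} := by
      intro z
      obtain ⟨V0, h1, h2⟩ := hpsi z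
      refine ⟨fun n => ⋂ k ∈ Finset.range (n+1), V0 k, ?_, ?_, ?_, ?_⟩
      · intro n
        exact isOpen_biInter_finset (fun k _ => (h1 k).1)
      · intro n
        exact mem_iInter₂.mpr (fun k _ => (h1 k).2)
      · intro n n' hnn y hy
        refine mem_iInter₂.mpr (fun k hk => ?_)
        exact mem_iInter₂.mp hy k (Finset.mem_range.mpr (by
          have := Finset.mem_range.mp hk; omega))
      · apply Subset.antisymm
        · intro w hw
          rw [← h2]
          refine mem_iInter.mpr (fun n => ?_)
          have hsub : (⋂ k ∈ Finset.range (n+1), V0 k) ⊆ V0 n :=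
            biInter_subset_of_mem (Finset.mem_range.mpr (by omega))
          exact closure_mono hsub (mem_iInter.mp hw n)
        · intro w hw
          rw [mem_singleton_iff] at hw
          subst hw
          exact mem_iInter.mpr (fun n =>
            subset_closure (mem_iInter₂.mpr (fun k _ => (h1 k).2)))
    choose 𝒱 hVo hVm hVa hVi using hsys
    have hesc : ∀ (z y : X), y ≠ z → ∃ n, y ∉ closure (𝒱 z n) := by
      intro z y hyz
      by_contra h
      push_neg at h
      have : y ∈ ⋂ n, closure (𝒱 z n) := mem_iInter.mpr h
      rw [hVi] at this
      exact hyz this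
    by_cases hbad : ∃ i, ∀ n, {m | a' m ∈ closure (𝒱 (a' i) n)}.Infinite
    · obtain ⟨i, hbadi⟩ := hbad
      set e := a' i with he
      set V : ℕ → Set X := 𝒱 e with hV
      -- build the core: an injective sequence of points of A sitting deep in the closures
      have hcore : ∀ (s : Finset ℕ) (j : ℕ), ∃ m, a' m ∈ closure (V j) ∧ m ∉ s ∧ m ≠ i := by
        intro s j
        have hinf := (hbadi j).diff (Set.Finite.union s.finite_toSet (Set.finite_singleton i))
        obtain ⟨m, hm⟩ := hinf.nonempty
        rw [mem_diff, mem_union, not_or] at hm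
        refine ⟨m, hm.1, fun h => hm.2.1 h, fun h => hm.2.2 (by simp [h])⟩
      choose sel3 hsel3a hsel3b hsel3c using hcore
      set Ψ : ℕ → Finset ℕ := fun j => Nat.rec (∅ : Finset ℕ) (fun j' t => insert (sel3 t j') t) j
        with hΨ
      set μ : ℕ → ℕ := fun j => sel3 (Ψ j) j with hμ
      have hΨsucc : ∀ j, Ψ (j+1) = insert (μ j) (Ψ j) := fun j => rfl
      have hΨmono : ∀ {j j'}, j ≤ j' → Ψ j ⊆ Ψ j' := by
        intro j j' h
        induction j' with
        | zero => simp_all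
        | succ n ih =>
          rcases Nat.lt_or_ge j (n+1) with h' | h'
          · exact (ih (by omega)).trans (by rw [hΨsucc]; exact Finset.subset_insert _ _)
          · have : j = n + 1 := by omega
            subst this; exact subset_rfl
      have hμmem : ∀ {j j'}, j < j' → μ j ∈ Ψ j' := by
        intro j j' h
        exact hΨmono (show j+1 ≤ j' by omega) (by rw [hΨsucc]; exact Finset.mem_insert_self _ _)
      have hμinj : Function.Injective μ := by
        intro j j' h
        by_contra hne
        rcases Nat.lt_or_ge j j' with h' | h'
        · have hmem := hμmem h'
          rw [h] at hmem
          exact hsel3b (Ψ j') j' hmem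
        · have hmem := hμmem (show j' < j by omega)
          rw [← h] at hmem
          exact hsel3b (Ψ j) j hmem
      set c : ℕ → X := fun j => a' (μ j) with hc
      have hccl : ∀ j, c j ∈ closure (V j) := fun j => hsel3a (Ψ j) j
      have hccl' : ∀ {n j}, n ≤ j → c j ∈ closure (V n) :=
        fun h => closure_mono (hVa e _ _ h) (hccl _)
      have hcne : ∀ j, c j ≠ e := fun j h => hsel3c (Ψ j) j (ha'inj h)
      have hcinj : Function.Injective c := ha'inj.comp hμinj
      have hcni : ∀ j, ¬ IsOpen ({c j} : Set X) := fun j => hni (μ j)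
      have hcrange : ∀ j, c j ∈ range a' := fun j => ⟨μ j, rfl⟩
      -- the key escape level for each column
      have hM : ∀ j, ∃ M, ∀ κ, ∃ z, z ∈ 𝒱 (c j) κ ∩ V j ∧ z ∉ closure (V M) ∧ z ≠ c j := by
        intro j
        by_contra hcon
        push_neg at hcon
        have hbdy : ∀ κ, c j ∈ closure ((𝒱 (c j) κ ∩ V j) \ {c j}) := by
          intro κ
          rw [mem_closure_iff]
          intro o ho hco
          have ho' : IsOpen (o ∩ 𝒱 (c j) κ) := ho.inter (hVo _ _)
          have hco' : c j ∈ o ∩ 𝒱 (c j) κ := ⟨hco, hVm _ _⟩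
          by_cases hcv : c j ∈ V j
          · have ho'' : IsOpen (o ∩ 𝒱 (c j) κ ∩ V j) := ho'.inter (hVo _ _)
            have hco'' : c j ∈ o ∩ 𝒱 (c j) κ ∩ V j := ⟨hco', hcv⟩
            by_cases hy : ∃ y ∈ o ∩ 𝒱 (c j) κ ∩ V j, y ≠ c j
            · obtain ⟨y, hy1, hy2⟩ := hy
              exact ⟨y, hy1.1.1, ⟨⟨hy1.1.2, hy1.2⟩, hy2⟩⟩
            · push_neg at hy
              exfalso
              apply hcni j
              have : o ∩ 𝒱 (c j) κ ∩ V j = {c j} :=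
                Subset.antisymm (fun y hy' => hy y hy') (by rintro y rfl; exact hco'')
              rw [← this]
              exact ho''
          · obtain ⟨y, hy1, hy2⟩ := mem_closure_iff.mp (hccl j) _ ho' hco'
            refine ⟨y, hy1.1, ⟨⟨hy1.2, hy2⟩, ?_⟩⟩
            rintro rfl
            exact hcv hy2
        have hcj : ∀ M, c j ∈ closure (V M) := by
          intro M
          obtain ⟨κ, hκ⟩ := hcon M
          have hsub : (𝒱 (c j) κ ∩ V j) \ {c j} ⊆ closure (V M) := by
            rintro z ⟨hz1, hz2⟩
            by_contra hz3
            exact hz2 (hκ z hz1 hz3)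
          have := closure_mono hsub (hbdy κ)
          rwa [closure_closure] at this
        have : c j ∈ ⋂ n, closure (V n) := mem_iInter.mpr hcj
        rw [hV, hVi] at this
        exact hcne j this
      choose Mf hMf using hM
      choose zf hz1 hz2 hz3 using hMf
      have hescz : ∀ j κ, ∃ ℓ, zf j κ ∉ closure (𝒱 (c j) ℓ) :=
        fun j κ => hesc (c j) _ (hz3 j κ)
      choose escf hescf using hescz
      set κf : ℕ → ℕ → ℕ :=
        fun j r => Nat.rec 0 (fun _ k => max (k+1) (escf j k)) r with hκf
      have hκsucc : ∀ j r, κf j (r+1) = max (κf j r + 1) (escf j (κf j r)) := fun j r => rfl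
      have hκmono : ∀ j, StrictMono (κf j) := by
        intro j
        apply strictMono_nat_of_lt_succ
        intro r
        rw [hκsucc]
        omega
      have hκge : ∀ j r, r ≤ κf j r := by
        intro j r
        induction r with
        | zero => omega
        | succ n ih => have := (hκmono j).lt_iff_lt.mpr (show n < n+1 by omega); omega
      set d : ℕ → ℕ → X := fun j r => zf j (κf j r) with hd
      have hd1 : ∀ j r, d j r ∈ 𝒱 (c j) (κf j r) := fun j r => (hz1 j (κf j r)).1
      have hd1' : ∀ j r, d j r ∈ V j := fun j r => (hz1 j (κf j r)).2
      have hd2 : ∀ j r, d j r ∉ closure (V (Mf j)) := fun j r => hz2 j (κf j r)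
      have hd3 : ∀ j r, d j r ≠ c j := fun j r => hz3 j (κf j r)
      have hd4 : ∀ j r, d j r ∉ closure (𝒱 (c j) (κf j (r+1))) := by
        intro j r hmem
        apply hescf j (κf j r)
        have hle : escf j (κf j r) ≤ κf j (r+1) := by rw [hκsucc]; omega
        exact closure_mono (hVa (c j) _ _ hle) hmem
      -- the columns used
      set jf : ℕ → ℕ := fun s => Nat.rec 0 (fun _ j => max (Mf j) j + 1) s with hjf
      have hjfsucc : ∀ s, jf (s+1) = max (Mf (jf s)) (jf s) + 1 := fun s => rfl
      have hjfmono : StrictMono jf := strictMono_nat_of_lt_succ (fun s => by rw [hjfsucc]; omega)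
      have hjfM : ∀ s, Mf (jf s) < jf (s+1) := fun s => by rw [hjfsucc]; omega
      set pt : ℕ × ℕ → X := fun p => d (jf p.1) p.2 with hpt
      have hRaCl : ∀ E, E ⊆ range a' → IsClosed E := aux_closed a' ha'star
      set opn : ℕ × ℕ → Set X := fun p =>
        ((𝒱 (c (jf p.1)) (κf (jf p.1) p.2) \ closure (𝒱 (c (jf p.1)) (κf (jf p.1) (p.2+1)))) ∩
          (V (jf p.1) \ closure (V (Mf (jf p.1))))) \ (range a' \ {pt p}) with hopn
      have hopno : ∀ p, IsOpen (opn p) := by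
        intro p
        apply IsOpen.sdiff
        · exact (((hVo _ _).sdiff isClosed_closure).inter ((hVo _ _).sdiff isClosed_closure))
        · exact hRaCl _ diff_subset
      have hptm : ∀ p, pt p ∈ opn p := by
        rintro ⟨s, r⟩
        refine ⟨⟨⟨hd1 _ _, hd4 _ _⟩, ⟨hd1' _ _, hd2 _ _⟩⟩, ?_⟩
        rintro ⟨-, hne⟩
        exact hne rfl
      have hdisj : ∀ p q : ℕ × ℕ, p ≠ q → Disjoint (opn p) (opn q) := by
        have hcol : ∀ s r r', r < r' → Disjoint (opn (s,r')) (opn (s,r)) := by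
          intro s r r' h
          rw [Set.disjoint_left]
          rintro y hy hy'
          have hle : κf (jf s) (r+1) ≤ κf (jf s) r' :=
            (hκmono (jf s)).monotone (show r+1 ≤ r' by omega)
          have hmem : y ∈ closure (𝒱 (c (jf s)) (κf (jf s) (r+1))) :=
            subset_closure (hVa _ _ _ hle hy.1.1.1)
          exact hy'.1.1.2 hmem
        have hrow : ∀ s s' r r', s < s' → Disjoint (opn (s',r')) (opn (s,r)) := by
          intro s s' r r' h
          rw [Set.disjoint_left]
          rintro y hy hy'
          have h1 : Mf (jf s) ≤ jf s' :=
            le_trans (le_of_lt (hjfM s)) (hjfmono.monotone (show s+1 ≤ s' by omega))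
          have hmem : y ∈ closure (V (Mf (jf s))) := subset_closure (hVa e _ _ h1 hy.1.2.1)
          exact hy'.1.2.2 hmem
        rintro ⟨s,r⟩ ⟨s',r'⟩ hne
        rcases Nat.lt_trichotomy s s' with h|h|h
        · exact (hrow s s' r r' h).symm
        · subst h
          rcases Nat.lt_trichotomy r r' with h'|h'|h'
          · exact (hcol s r r' h').symm
          · exact (hne (by simp [h'])).elim
          · exact hcol s r' r h'
        · exact hrow s' s r' r h
      have hptinj : Function.Injective pt := by
        intro p q h
        by_contra hne
        have hd' := hdisj p q hne
        have h2 := hptm q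
        rw [← h] at h2
        exact (hd'.le_bot ⟨hptm p, h2⟩).elim
      set D : Set X := range pt with hD
      have hDcnt : D.Countable := countable_range pt
      set Ufun : X → Set X := fun y => if h : ∃ p, pt p = y then opn h.choose else ∅ with hUfun
      have hUval : ∀ p, Ufun (pt p) = opn p := by
        intro p
        have h : ∃ q, pt q = pt p := ⟨p, rfl⟩
        rw [hUfun]
        simp only [dif_pos h]
        rw [hptinj h.choose_spec]
      have hDsd : StronglyDiscrete D := by
        refine ⟨Ufun, ?_, ?_⟩
        · rintro y ⟨p, rfl⟩
          rw [hUval]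
          exact ⟨hopno p, hptm p⟩
        · rintro y ⟨p, rfl⟩ y' ⟨q, rfl⟩ hne
          have hpq : p ≠ q := by rintro rfl; exact hne rfl
          rw [Function.onFun, hUval, hUval]
          exact hdisj p q hpq
      have hCC := hsd D hDcnt hDsd
      have hclD : closure D ⊆ D ∪ {e} ∪ (range fun s => c (jf s)) := by
        intro w hw
        by_contra hcon
        rw [mem_union, mem_union] at hcon
        push_neg at hcon
        obtain ⟨⟨hwD, hwe⟩, hwc⟩ := hcon
        obtain ⟨nstar, hnstar⟩ := hesc e w (by simpa using hwe)
        have hl : ∀ s, ∃ ℓ, w ∉ closure (𝒱 (c (jf s)) ℓ) := by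
          intro s
          refine hesc (c (jf s)) w ?_
          intro h
          exact hwc ⟨s, h.symm⟩
        choose ℓf hℓf using hl
        set L := (Finset.range nstar).sup ℓf with hL
        set N : Set X := (closure (V nstar))ᶜ ∩
          ⋂ s ∈ Finset.range nstar, (closure (𝒱 (c (jf s)) (ℓf s)))ᶜ with hN
        have hNo : IsOpen N := (isClosed_closure.isOpen_compl).inter
          (isOpen_biInter_finset (fun s _ => isClosed_closure.isOpen_compl))
        have hNw : w ∈ N := ⟨hnstar, mem_iInter₂.mpr (fun s _ => hℓf s)⟩
        have hkey : ∀ p : ℕ × ℕ, pt p ∈ N → p.1 < nstar ∧ p.2 < L + 1 := by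
          rintro ⟨s, r⟩ hp
          have hs : s < nstar := by
            by_contra hge
            push_neg at hge
            have h1 : nstar ≤ jf s := le_trans hge (hjfmono.le_apply)
            have : pt (s,r) ∈ closure (V nstar) :=
              subset_closure (hVa e _ _ h1 (hd1' (jf s) r))
            exact hp.1 this
          refine ⟨hs, ?_⟩
          have hsmem : s ∈ Finset.range nstar := Finset.mem_range.mpr hs
          have h2 : pt (s,r) ∉ closure (𝒱 (c (jf s)) (ℓf s)) := mem_iInter₂.mp hp.2 s hsmem
          have h3 : κf (jf s) r < ℓf s := by
            by_contra hge
            push_neg at hge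
            exact h2 (subset_closure (hVa (c (jf s)) _ _ hge (hd1 (jf s) r)))
          have h4 : ℓf s ≤ L := Finset.le_sup hsmem
          have h5 := hκge (jf s) r
          omega
        have hfinND : (N ∩ D).Finite := by
          have hsub : N ∩ D ⊆ pt '' (Iio nstar ×ˢ Iio (L+1)) := by
            rintro y ⟨hyN, ⟨p, rfl⟩⟩
            exact ⟨p, (hkey p hyN), rfl⟩
          exact ((Set.finite_Iio nstar).prod (Set.finite_Iio (L+1))).image pt |>.subset hsub
        have hN' : IsOpen (N \ (N ∩ D)) := hNo.sdiff hfinND.isClosed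
        have hwN' : w ∈ N \ (N ∩ D) := ⟨hNw, fun h => hwD h.2⟩
        obtain ⟨y, hy1, hy2⟩ := mem_closure_iff.mp hw _ hN' hwN'
        exact hy1.2 ⟨hy1.1, hy2⟩
      have hclcnt : (closure D).Countable :=
        ((hDcnt.union (countable_singleton e)).union (countable_range _)).mono hclD
      have hacc : ∀ s, c (jf s) ∈ closure D := by
        intro s
        have hex : ∃ x ∈ closure D, ∀ N : Set X, IsOpen N → x ∈ N →
            {r | pt (s,r) ∈ N}.Infinite := by
          by_contra hcon
          push_neg at hcon
          have hne : (closure D).Nonempty := ⟨pt (0,0), subset_closure ⟨(0,0), rfl⟩⟩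
          obtain ⟨g, hg⟩ := hclcnt.exists_eq_range hne
          have hch : ∀ k : ℕ, ∃ N, IsOpen N ∧ g k ∈ N ∧ ¬({r | pt (s,r) ∈ N}.Infinite) := by
            intro k
            simp only [Set.not_infinite]; apply hcon
            rw [hg]
            exact mem_range_self k
          choose Nf hNo hNm hNfin using hch
          set N' : ℕ → Set X := fun k =>
            Nf k \ (((fun r => pt (s, r)) '' {r | pt (s,r) ∈ Nf k}) \ {g k}) with hN'
          have hNfin' : ∀ k, ({r | pt (s,r) ∈ Nf k}).Finite := fun k => Set.not_infinite.mp (hNfin k)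
          have hN'o : ∀ k, IsOpen (N' k) :=
            fun k => (hNo k).sdiff (((hNfin' k).image _).diff).isClosed
          have hN'm : ∀ k, g k ∈ N' k := by
            intro k
            refine ⟨hNm k, ?_⟩
            rintro ⟨-, hne2⟩
            exact hne2 rfl
          have hN'key : ∀ k r, pt (s,r) ∈ N' k → pt (s,r) = g k := by
            intro k r hr
            by_contra hne2
            exact hr.2 ⟨⟨r, hr.1, rfl⟩, hne2⟩
          obtain ⟨t, ht⟩ := hCC N' hN'o (by
            intro y hy
            rw [hg] at hy
            obtain ⟨k, rfl⟩ := hy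
            exact mem_iUnion.mpr ⟨k, hN'm k⟩)
          have hrinj : Function.Injective (fun r => pt (s, r)) := by
            intro r r' h
            have := hptinj h
            exact (Prod.mk.injEq _ _ _ _ ▸ this).2
          have hsub : range (fun r => pt (s, r)) ⊆ g '' t := by
            rintro y ⟨r, rfl⟩
            have hmem : pt (s,r) ∈ closure D := subset_closure ⟨(s,r), rfl⟩
            obtain ⟨k, hk1, hk2⟩ := mem_iUnion₂.mp (ht hmem)
            exact ⟨k, hk1, (hN'key k r hk2).symm⟩
          exact (Set.infinite_range_of_injective hrinj) ((t.finite_toSet.image g).subset hsub)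
        obtain ⟨x, hx1, hx2⟩ := hex
        have hxc : ∀ ℓ, x ∈ closure (𝒱 (c (jf s)) ℓ) := by
          intro ℓ
          rw [mem_closure_iff]
          intro o ho hxo
          obtain ⟨r, hr1, hr2⟩ := (hx2 o ho hxo).exists_gt ℓ
          refine ⟨pt (s,r), hr1, ?_⟩
          exact hVa _ _ _ (le_trans (le_of_lt hr2) (hκge (jf s) r)) (hd1 (jf s) r)
        have hxi : x ∈ ⋂ ℓ, closure (𝒱 (c (jf s)) ℓ) := mem_iInter.mpr hxc
        rw [hVi] at hxi
        rw [mem_singleton_iff] at hxi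
        rw [← hxi]
        exact hx1
      -- the final countable cover of closure D
      set H : ℕ → Set X := fun k =>
        match Denumerable.ofNat (Option (ℕ ⊕ ℕ × ℕ)) k with
        | none => (range a' \ {e})ᶜ
        | some (Sum.inl s) => (range a' \ {c (jf s)})ᶜ
        | some (Sum.inr p) => opn p
        with hH
      have hHo : ∀ k, IsOpen (H k) := by
        intro k
        simp only [hH]
        rcases hof : Denumerable.ofNat (Option (ℕ ⊕ ℕ × ℕ)) k with _ | (s' | p)
        · exact (hRaCl _ diff_subset).isOpen_compl
        · exact (hRaCl _ diff_subset).isOpen_compl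
        · exact hopno p
      have hHc : closure D ⊆ ⋃ k, H k := by
        intro w hw
        rcases hclD hw with (hw' | hw') | hw'
        · obtain ⟨p, rfl⟩ := hw'
          refine mem_iUnion.mpr ⟨Encodable.encode (some (Sum.inr p) : Option (ℕ ⊕ ℕ × ℕ)), ?_⟩
          rw [hH]
          simp only [Denumerable.ofNat_encode]
          exact hptm p
        · rw [mem_singleton_iff] at hw'
          subst hw'
          refine mem_iUnion.mpr ⟨Encodable.encode (none : Option (ℕ ⊕ ℕ × ℕ)), ?_⟩
          rw [hH]
          simp only [Denumerable.ofNat_encode]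
          rintro ⟨-, hne2⟩
          exact hne2 rfl
        · obtain ⟨s, rfl⟩ := hw'
          refine mem_iUnion.mpr ⟨Encodable.encode (some (Sum.inl s) : Option (ℕ ⊕ ℕ × ℕ)), ?_⟩
          rw [hH]
          simp only [Denumerable.ofNat_encode]
          rintro ⟨-, hne2⟩
          exact hne2 rfl
      obtain ⟨t, ht⟩ := hCC H hHo hHc
      have hkf : ∀ s : ℕ, ∃ k, k ∈ t ∧ c (jf s) ∈ H k := by
        intro s
        obtain ⟨k, hk1, hk2⟩ := mem_iUnion₂.mp (ht (hacc s))
        exact ⟨k, hk1, hk2⟩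
      choose kf hkt hkm using hkf
      have : ∃ s s' : ℕ, s ≠ s' ∧ kf s = kf s' := by
        obtain ⟨s, s', hne2, heq⟩ :=
          Finite.exists_ne_map_eq_of_infinite (fun s : ℕ => (⟨kf s, hkt s⟩ : {k // k ∈ t}))
        exact ⟨s, s', hne2, by simpa using heq⟩
      obtain ⟨s, s', hss, hkk⟩ := this
      have hcs : c (jf s) ∈ H (kf s) := hkm s
      have hcs' : c (jf s') ∈ H (kf s) := by rw [hkk]; exact hkm s'
      have hjne : c (jf s) ≠ c (jf s') := by
        intro h
        exact hss (hjfmono.injective (hcinj h))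
      rcases hof : Denumerable.ofNat (Option (ℕ ⊕ ℕ × ℕ)) (kf s) with _ | (s'' | p)
      · simp only [hH, hof] at hcs
        exact hcs ⟨hcrange (jf s), fun h => hcne (jf s) h⟩
      · simp only [hH, hof] at hcs hcs'
        have h1 : c (jf s) = c (jf s'') := by
          by_contra hne2
          exact hcs ⟨hcrange (jf s), hne2⟩
        have h2 : c (jf s') = c (jf s'') := by
          by_contra hne2
          exact hcs' ⟨hcrange (jf s'), hne2⟩
        exact hjne (h1.trans h2.symm)
      · simp only [hH, hof] at hcs hcs'
        have h1 : c (jf s) = pt p := by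
          by_contra hne2
          exact hcs.2 ⟨hcrange (jf s), hne2⟩
        have h2 : c (jf s') = pt p := by
          by_contra hne2
          exact hcs'.2 ⟨hcrange (jf s'), hne2⟩
        exact hjne (h1.trans h2.symm)
    · push_neg at hbad
      have hlev' : ∀ i, ∃ n, {m | a' m ∈ closure (𝒱 (a' i) n)}.Finite := by
        intro i
        obtain ⟨n, hn⟩ := hbad i
        exact ⟨n, hn⟩
      choose lev hlev using hlev'
      have hsel : ∀ s : Finset ℕ, ∃ m : ℕ,
          (∀ r ∈ s, a' m ∉ closure (𝒱 (a' r) (lev r))) ∧ m ∉ s := by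
        intro s
        have hfin2 : ({m | ∃ r ∈ s, a' m ∈ closure (𝒱 (a' r) (lev r))} ∪ (s : Set ℕ)).Finite := by
          apply Set.Finite.union _ s.finite_toSet
          have hsub : {m | ∃ r ∈ s, a' m ∈ closure (𝒱 (a' r) (lev r))} ⊆
              ⋃ r ∈ (s : Set ℕ), {m | a' m ∈ closure (𝒱 (a' r) (lev r))} := by
            rintro m ⟨r, hr, hmem⟩
            exact mem_iUnion₂.mpr ⟨r, hr, hmem⟩
          exact (Set.Finite.biUnion s.finite_toSet (fun r _ => hlev r)).subset hsub
        obtain ⟨m, hm⟩ := hfin2.infinite_compl.nonempty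
        rw [mem_compl_iff, mem_union, not_or] at hm
        refine ⟨m, fun r hr hmem => hm.1 ⟨r, hr, hmem⟩, fun h => hm.2 h⟩
      choose sel hsel1 hsel2 using hsel
      set Φ : ℕ → Finset ℕ := fun s => Nat.rec (∅ : Finset ℕ) (fun _ t => insert (sel t) t) s
        with hΦ
      set φ : ℕ → ℕ := fun s => sel (Φ s) with hφ
      have hΦsucc : ∀ s, Φ (s+1) = insert (φ s) (Φ s) := fun s => rfl
      have hΦmono : ∀ {s s'}, s ≤ s' → Φ s ⊆ Φ s' := by
        intro s s' h
        induction s' with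
        | zero => simp_all
        | succ n ih =>
          rcases Nat.lt_or_ge s (n+1) with h' | h'
          · exact (ih (by omega)).trans (by rw [hΦsucc]; exact Finset.subset_insert _ _)
          · have : s = n + 1 := by omega
            subst this; exact subset_rfl
      have hφmem : ∀ {s s'}, s < s' → φ s ∈ Φ s' := by
        intro s s' h
        exact hΦmono (show s+1 ≤ s' by omega) (by rw [hΦsucc]; exact Finset.mem_insert_self _ _)
      have hφinj : Function.Injective φ := by
        intro s s' h
        by_contra hne
        rcases Nat.lt_or_ge s s' with h' | h'
        · have hmem := hφmem h'
          rw [h] at hmem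
          exact hsel2 (Φ s') hmem
        · have hmem := hφmem (show s' < s by omega)
          rw [← h] at hmem
          exact hsel2 (Φ s) hmem
      have havoid : ∀ {r s}, r < s → a' (φ s) ∉ closure (𝒱 (a' (φ r)) (lev (φ r))) := by
        intro r s h
        exact hsel1 (Φ s) (φ r) (hφmem h)
      set G : ℕ → Set X := fun s =>
        𝒱 (a' (φ s)) (lev (φ s)) \ (⋃ r ∈ Finset.range s, closure (𝒱 (a' (φ r)) (lev (φ r)))) with hG
      have hGsub : ∀ s, G s ⊆ 𝒱 (a' (φ s)) (lev (φ s)) := fun s => diff_subset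
      have hGo : ∀ s, IsOpen (G s) := by
        intro s
        apply IsOpen.sdiff (hVo _ _)
        exact isClosed_biUnion_finset (fun r _ => isClosed_closure)
      have hGm : ∀ s, a' (φ s) ∈ G s := by
        intro s
        refine ⟨hVm _ _, ?_⟩
        intro hmem
        obtain ⟨r, hr, hmem'⟩ := mem_iUnion₂.mp hmem
        exact havoid (Finset.mem_range.mp hr) hmem'
      have hGd : ∀ m n, m ≠ n → Disjoint (G m) (G n) := by
        have key : ∀ {r s}, r < s → Disjoint (G s) (G r) := by
          intro r s h
          rw [Set.disjoint_left]
          intro y hys hyr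
          exact hys.2 (mem_iUnion₂.mpr ⟨r, Finset.mem_range.mpr h,
            subset_closure (hGsub r hyr)⟩)
        intro m n hmn
        rcases Nat.lt_or_ge m n with h | h
        · exact (key h).symm
        · exact key (by omega)
      refine aux_K1 hsd (fun s => a' (φ s)) (ha'inj.comp hφinj) ?_ G hGo hGm hGd
      intro z
      obtain ⟨W, h1, h2, h3⟩ := ha'star z
      refine ⟨W, h1, h2, ?_⟩
      have : {s | a' (φ s) ∈ W} = φ ⁻¹' {m | a' m ∈ W} := rfl
      rw [this]
      exact Set.Finite.preimage hφinj.injOn h3
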